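/- Pointwise bound for the long-range convolution part: Let $C_\infty \in \mathbb{R}$ and let $f : \mathbb{R}^2 \to \mathbb{R}$ be differentiable with $\nabla f$ and $f - C_\infty$ bounded. Then for every $x \in \mathbb{R}^2$ the principal value $J_9(x) = -\lim_{R \to \infty} \int_{\{1 < |y| < R\}} \frac{\nabla f(x-y) \cdot y}{[|y|^2 + (f(x) - f(x-y))^2]^{3/2}}\, dy$ exists and there is a universal constant $C$ with $|J_9(x)| \le C\, \big(\sup_x|\nabla f(x)| + 1\big) \, \|f - C_\infty\|_{L^\infty}$. -/

import Mathlib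

open MeasureTheory Filter Topology Real Set
open scoped RealInnerProductSpace

noncomputable section

abbrev E2 := EuclideanSpace ℝ (Fin 2)

def TE : (ℝ × ℝ) ≃ᵐ E2 :=
  (MeasurableEquiv.finTwoArrow).symm.trans (MeasurableEquiv.toLp 2 (Fin 2 → ℝ))

lemma TE_measurePreserving : MeasurePreserving TE :=
  ((EuclideanSpace.volume_preserving_symm_measurableEquiv_toLp (Fin 2)).symm).comp
    ((volume_preserving_finTwoArrow ℝ).symm)

lemma TE_apply (p : ℝ × ℝ) (i : Fin 2) : TE p i = ![p.1, p.2] i := by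
  simp [TE, MeasurableEquiv.coe_toLp, MeasurableEquiv.finTwoArrow,
    MeasurableEquiv.piFinTwo, piFinTwoEquiv]

lemma TE_norm (p : ℝ × ℝ) : ‖TE p‖ = Real.sqrt (p.1 ^ 2 + p.2 ^ 2) := by
  rw [EuclideanSpace.norm_eq]
  congr 1
  rw [Fin.sum_univ_two, TE_apply, TE_apply]
  simp

lemma TE_smul (r a b : ℝ) : TE (r * a, r * b) = r • TE (a, b) := by
  ext i
  have h1 := TE_apply (r * a, r * b) i
  have h2 := TE_apply (a, b) i
  fin_cases i <;>
    simp_all [PiLp.smul_apply, smul_eq_mul]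

lemma TE_cont : Continuous TE := by
  have h : Continuous fun p : ℝ × ℝ =>
      (PiLp.continuousLinearEquiv 2 ℝ (fun _ : Fin 2 => ℝ)).symm ![p.1, p.2] := by
    apply (PiLp.continuousLinearEquiv 2 ℝ (fun _ : Fin 2 => ℝ)).symm.continuous.comp
    apply continuous_pi
    intro i
    fin_cases i <;> simp <;> fun_prop
  have he : ⇑TE = fun p : ℝ × ℝ =>
      (PiLp.continuousLinearEquiv 2 ℝ (fun _ : Fin 2 => ℝ)).symm ![p.1, p.2] := by
    funext p
    ext i
    rw [TE_apply]
    rfl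
  rw [he]; exact h

lemma measurable_gradient (f : E2 → ℝ) : Measurable (gradient f) := by
  have h : Measurable (fderiv ℝ f) := measurable_fderiv ℝ f
  exact ((InnerProductSpace.toDual ℝ E2).symm.continuous.measurable).comp h

lemma rpow_three_halves {t : ℝ} (ht : 0 ≤ t) : t ^ (3 / 2 : ℝ) = Real.sqrt t ^ 3 := by
  rw [Real.sqrt_eq_rpow, ← Real.rpow_natCast (t ^ ((1:ℝ)/2)) 3, ← Real.rpow_mul ht]
  norm_num

/-! ### Ray functions -/

variable (f : E2 → ℝ) (Cinf : ℝ) (x ω : E2)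

def rayPhi (r : ℝ) : ℝ := f x - f (x - r • ω)

def rayPhi' (r : ℝ) : ℝ := ⟪gradient f (x - r • ω), ω⟫

def rayU (r : ℝ) : ℝ := Cinf - f (x - r • ω)

def rayD (r : ℝ) : ℝ := r ^ 2 + rayPhi f x ω r ^ 2

def rayQ (r : ℝ) : ℝ := Real.sqrt (rayD f x ω r)

def rayV (r : ℝ) : ℝ := r ^ 2 / rayQ f x ω r ^ 3

def rayV' (r : ℝ) : ℝ :=
  (2 * r * rayQ f x ω r ^ 3 -
      r ^ 2 * (3 * rayQ f x ω r ^ 2 *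
        (1 / (2 * rayQ f x ω r) * (2 * r + 2 * rayPhi f x ω r * rayPhi' f x ω r)))) /
    (rayQ f x ω r ^ 3) ^ 2

variable {f Cinf x ω}

lemma rayQ_ge {r : ℝ} (hr : 0 ≤ r) : r ≤ rayQ f x ω r := by
  have h := Real.sqrt_le_sqrt (show r ^ 2 ≤ rayD f x ω r by
    rw [rayD]; nlinarith [sq_nonneg (rayPhi f x ω r)])
  rwa [Real.sqrt_sq hr] at h

lemma rayQ_nonneg (r : ℝ) : 0 ≤ rayQ f x ω r := Real.sqrt_nonneg _

lemma abs_rayPhi_le_rayQ (r : ℝ) : |rayPhi f x ω r| ≤ rayQ f x ω r := by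
  rw [rayQ, ← Real.sqrt_sq_eq_abs]
  exact Real.sqrt_le_sqrt (by rw [rayD]; nlinarith [sq_nonneg r])

lemma hasDerivAt_rayPhi (hf : Differentiable ℝ f) (r : ℝ) :
    HasDerivAt (rayPhi f x ω) (rayPhi' f x ω r) r := by
  have hz : HasDerivAt (fun s : ℝ => x - s • ω) (-ω) r := by
    simpa using ((hasDerivAt_id r).smul_const ω).const_sub x
  have hgrad : HasGradientAt f (gradient f (x - r • ω)) (x - r • ω) :=
    (hf _).hasGradientAt
  have hF : HasFDerivAt f ((InnerProductSpace.toDual ℝ E2) (gradient f (x - r • ω)))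
      (x - r • ω) := hasGradientAt_iff_hasFDerivAt.mp hgrad
  have hc : HasDerivAt (fun s : ℝ => f (x - s • ω))
      (((InnerProductSpace.toDual ℝ E2) (gradient f (x - r • ω))) (-ω)) r :=
    hF.comp_hasDerivAt r hz
  have : HasDerivAt (fun s : ℝ => f x - f (x - s • ω))
      (-(((InnerProductSpace.toDual ℝ E2) (gradient f (x - r • ω))) (-ω))) r := hc.const_sub _
  show HasDerivAt (fun s => f x - f (x - s • ω)) (rayPhi' f x ω r) r
  simpa [rayPhi, rayPhi', inner_neg_right] using this

lemma hasDerivAt_rayU (hf : Differentiable ℝ f) (r : ℝ) :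
    HasDerivAt (rayU f Cinf x ω) (rayPhi' f x ω r) r := by
  have h := (hasDerivAt_rayPhi (x := x) (ω := ω) hf r).const_add (Cinf - f x)
  have he : (fun s => Cinf - f x + rayPhi f x ω s) = rayU f Cinf x ω := by
    funext s; simp only [rayPhi, rayU]; ring
  rwa [he] at h

lemma rayD_pos {r : ℝ} (hr : 0 < r) : 0 < rayD f x ω r := by
  rw [rayD]; positivity

lemma rayQ_pos {r : ℝ} (hr : 0 < r) : 0 < rayQ f x ω r := lt_of_lt_of_le hr (rayQ_ge hr.le)

lemma hasDerivAt_rayV (hf : Differentiable ℝ f) {r : ℝ} (hr : 0 < r) :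
    HasDerivAt (rayV f x ω) (rayV' f x ω r) r := by
  have hD : HasDerivAt (rayD f x ω) (2 * r + 2 * rayPhi f x ω r * rayPhi' f x ω r) r := by
    have h1 : HasDerivAt (fun s : ℝ => s ^ 2) (2 * r) r := by
      simpa using hasDerivAt_pow 2 r
    have h2 : HasDerivAt (fun s => rayPhi f x ω s ^ 2)
        (2 * rayPhi f x ω r * rayPhi' f x ω r) r := by
      have := (hasDerivAt_rayPhi (x := x) (ω := ω) hf r).pow 2
      simpa [mul_comm, mul_assoc, mul_left_comm, Pi.pow_def] using this
    show HasDerivAt (fun s => s ^ 2 + rayPhi f x ω s ^ 2) _ r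
    simpa [rayD, Pi.add_def] using h1.add h2
  have hQ : HasDerivAt (rayQ f x ω)
      (1 / (2 * rayQ f x ω r) * (2 * r + 2 * rayPhi f x ω r * rayPhi' f x ω r)) r := by
    have hs := (Real.hasDerivAt_sqrt (ne_of_gt (rayD_pos hr))).comp r hD
    show HasDerivAt (fun s => Real.sqrt (rayD f x ω s)) _ r
    simpa [rayQ, Function.comp_def] using hs
  have hQ3 : HasDerivAt (fun s => rayQ f x ω s ^ 3)
      (3 * rayQ f x ω r ^ 2 *
        (1 / (2 * rayQ f x ω r) * (2 * r + 2 * rayPhi f x ω r * rayPhi' f x ω r))) r := by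
    have := hQ.pow 3
    simpa [mul_comm, mul_assoc, mul_left_comm, Pi.pow_def] using this
  have h1 : HasDerivAt (fun s : ℝ => s ^ 2) (2 * r) r := by
    simpa using hasDerivAt_pow 2 r
  have hne : rayQ f x ω r ^ 3 ≠ 0 := pow_ne_zero _ (ne_of_gt (rayQ_pos hr))
  have := h1.div hQ3 hne
  show HasDerivAt (fun s => s ^ 2 / rayQ f x ω s ^ 3) _ r
  simpa [rayV, rayV', Pi.div_def] using this

lemma rayV'_eq {r : ℝ} (hr : 0 < r) :
    rayV' f x ω r =
      (2 * r * rayQ f x ω r ^ 2 -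
        3 * r ^ 2 * (r + rayPhi f x ω r * rayPhi' f x ω r)) / rayQ f x ω r ^ 5 := by
  have hq : rayQ f x ω r ≠ 0 := ne_of_gt (rayQ_pos hr)
  rw [rayV']
  field_simp

lemma rayV'_bound {L r : ℝ} (hr : 1 ≤ r) (hL : |rayPhi' f x ω r| ≤ L) :
    |rayV' f x ω r| ≤ (5 + 3 * L) / r ^ 2 := by
  have hr0 : (0:ℝ) < r := lt_of_lt_of_le one_pos hr
  set q := rayQ f x ω r with hqdef
  set φ := rayPhi f x ω r with hφdef
  set φ' := rayPhi' f x ω r with hφ'def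
  have hq0 : 0 < q := rayQ_pos hr0
  have hrq : r ≤ q := rayQ_ge hr0.le
  have hφq : |φ| ≤ q := abs_rayPhi_le_rayQ r
  have hL0 : 0 ≤ L := le_trans (abs_nonneg _) hL
  have hφ'L : |φ'| ≤ L := hL
  rw [rayV'_eq hr0, abs_div, abs_of_pos (show (0:ℝ) < q ^ 5 by positivity)]
  have hnum : |2 * r * q ^ 2 - 3 * r ^ 2 * (r + φ * φ')| ≤ (5 + 3 * L) * q ^ 3 := by
    have h1 : |2 * r * q ^ 2| ≤ 2 * q ^ 3 := by
      rw [abs_of_nonneg (by positivity)]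
      nlinarith
    have hm : |φ * φ'| ≤ q * L := by
      rw [abs_mul]
      exact mul_le_mul hφq hφ'L (abs_nonneg _) hq0.le
    have h2 : |3 * r ^ 2 * (r + φ * φ')| ≤ 3 * q ^ 3 + 3 * L * q ^ 3 := by
      rw [abs_mul, abs_of_nonneg (show (0:ℝ) ≤ 3 * r ^ 2 by positivity)]
      have habs : |r + φ * φ'| ≤ q + q * L := by
        calc |r + φ * φ'| ≤ |r| + |φ * φ'| := abs_add_le _ _
        _ ≤ q + q * L := by rw [abs_of_nonneg hr0.le]; exact add_le_add hrq hm
      have hrrqq : r ^ 2 ≤ q ^ 2 := by nlinarith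
      calc 3 * r ^ 2 * |r + φ * φ'| ≤ 3 * r ^ 2 * (q + q * L) := by
            have h0 : (0:ℝ) ≤ 3 * r ^ 2 := by positivity
            exact mul_le_mul_of_nonneg_left habs h0
        _ ≤ 3 * q ^ 2 * (q + q * L) := by
            have h0 : (0:ℝ) ≤ q + q * L := by nlinarith
            nlinarith
        _ = 3 * q ^ 3 + 3 * L * q ^ 3 := by ring
    calc |2 * r * q ^ 2 - 3 * r ^ 2 * (r + φ * φ')|
        ≤ |2 * r * q ^ 2| + |3 * r ^ 2 * (r + φ * φ')| := abs_sub _ _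
      _ ≤ 2 * q ^ 3 + (3 * q ^ 3 + 3 * L * q ^ 3) := add_le_add h1 h2
      _ = (5 + 3 * L) * q ^ 3 := by ring
  calc |2 * r * q ^ 2 - 3 * r ^ 2 * (r + φ * φ')| / q ^ 5
      ≤ (5 + 3 * L) * q ^ 3 / q ^ 5 := by gcongr
    _ = (5 + 3 * L) / q ^ 2 := by
        rw [eq_div_iff (by positivity)]; field_simp
    _ ≤ (5 + 3 * L) / r ^ 2 := by
        apply div_le_div_of_nonneg_left (by nlinarith) (by positivity)
        nlinarith

lemma rayV_nonneg (r : ℝ) : 0 ≤ rayV f x ω r := by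
  rw [rayV]
  exact div_nonneg (sq_nonneg r) (pow_nonneg (rayQ_nonneg r) 3)

lemma rayV_le {r : ℝ} (hr : 1 ≤ r) : rayV f x ω r ≤ 1 / r := by
  have hr0 : (0:ℝ) < r := lt_of_lt_of_le one_pos hr
  set q := rayQ f x ω r with hqdef
  have hrq : r ≤ q := rayQ_ge hr0.le
  have hq0 : 0 < q := lt_of_lt_of_le hr0 hrq
  rw [rayV, div_le_div_iff₀ (by positivity) hr0]
  calc r ^ 2 * r = r ^ 3 := by ring
    _ ≤ q ^ 3 := by gcongr
    _ = 1 * q ^ 3 := by ring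

/-! ### Measurability and integrability -/

lemma measurable_rayPhi' : Measurable (rayPhi' f x ω) := by
  apply Measurable.inner
  · exact (measurable_gradient f).comp (by fun_prop)
  · exact measurable_const

lemma continuous_rayPhi (hf : Differentiable ℝ f) : Continuous (rayPhi f x ω) := by
  have := hf.continuous
  unfold rayPhi; fun_prop

lemma continuous_rayU (hf : Differentiable ℝ f) : Continuous (rayU f Cinf x ω) := by
  have := hf.continuous
  unfold rayU; fun_prop

lemma continuous_rayQ (hf : Differentiable ℝ f) : Continuous (rayQ f x ω) := by
  have := continuous_rayPhi (x := x) (ω := ω) hf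
  unfold rayQ rayD; fun_prop

lemma measurable_rayV (hf : Differentiable ℝ f) : Measurable (rayV f x ω) := by
  have h := continuous_rayQ (x := x) (ω := ω) hf
  unfold rayV
  exact ((continuous_pow 2).measurable.comp measurable_id).div ((h.pow 3).measurable)

lemma measurable_rayV' (hf : Differentiable ℝ f) : Measurable (rayV' f x ω) := by
  have hq := (continuous_rayQ (x := x) (ω := ω) hf).measurable
  have hφ := (continuous_rayPhi (x := x) (ω := ω) hf).measurable
  have hφ' := measurable_rayPhi' (f := f) (x := x) (ω := ω)
  unfold rayV'
  apply Measurable.div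
  · apply Measurable.sub
    · exact (measurable_const.mul measurable_id).mul (hq.pow_const 3)
    · exact ((measurable_id.pow_const 2)).mul
        ((measurable_const.mul (hq.pow_const 2)).mul
          (((measurable_const.div (measurable_const.mul hq))).mul
            ((measurable_const.mul measurable_id).add
              ((measurable_const.mul hφ).mul hφ'))))
  · exact (hq.pow_const 3).pow_const 2

lemma intervalIntegrable_of_bounded {g : ℝ → ℝ} (hg : Measurable g) {C a b : ℝ}
    (hC : ∀ r ∈ Set.uIcc a b, |g r| ≤ C) : IntervalIntegrable g volume a b := by
  rw [intervalIntegrable_iff]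
  apply Integrable.mono' (g := fun _ => C)
  · exact integrableOn_const (by exact measure_Ioc_lt_top.ne)
  · exact hg.aestronglyMeasurable.restrict
  · filter_upwards [ae_restrict_mem measurableSet_uIoc] with r hr
    exact hC r (uIoc_subset_uIcc hr)

lemma abs_rayPhi'_le {L : ℝ} (hω : ‖ω‖ = 1) (hLb : ∀ z, ‖gradient f z‖ ≤ L) (r : ℝ) :
    |rayPhi' f x ω r| ≤ L := by
  calc |rayPhi' f x ω r| ≤ ‖gradient f (x - r • ω)‖ * ‖ω‖ := abs_real_inner_le_norm _ _
    _ = ‖gradient f (x - r • ω)‖ := by rw [hω, mul_one]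
    _ ≤ L := hLb _

/-! ### Integration by parts along a ray -/

lemma ray_ibp (hf : Differentiable ℝ f) (hω : ‖ω‖ = 1) {L : ℝ}
    (hLb : ∀ z, ‖gradient f z‖ ≤ L) {R : ℝ} (hR : 1 ≤ R) :
    (∫ r in Ioo 1 R, rayPhi' f x ω r * rayV f x ω r) +
      ∫ r in Ioo 1 R, rayU f Cinf x ω r * rayV' f x ω r =
    rayU f Cinf x ω R * rayV f x ω R - rayU f Cinf x ω 1 * rayV f x ω 1 := by
  have hL0 : 0 ≤ L := le_trans (norm_nonneg _) (hLb x)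
  have key := intervalIntegral.integral_mul_deriv_eq_deriv_mul
    (u := rayU f Cinf x ω) (v := rayV f x ω)
    (u' := rayPhi' f x ω) (v' := rayV' f x ω) (a := 1) (b := R)
    (fun r hr => hasDerivAt_rayU hf r)
    (fun r hr => by
      apply hasDerivAt_rayV hf
      rw [Set.uIcc_of_le hR] at hr
      exact lt_of_lt_of_le one_pos hr.1)
    (intervalIntegrable_of_bounded measurable_rayPhi'
      (fun r _ => abs_rayPhi'_le hω hLb r))
    (intervalIntegrable_of_bounded (measurable_rayV' hf) (C := 5 + 3 * L)
      (fun r hr => by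
        rw [Set.uIcc_of_le hR] at hr
        calc |rayV' f x ω r| ≤ (5 + 3 * L) / r ^ 2 :=
              rayV'_bound hr.1 (abs_rayPhi'_le hω hLb r)
          _ ≤ (5 + 3 * L) / 1 := by
              apply div_le_div_of_nonneg_left (by positivity) one_pos
              nlinarith [hr.1]
          _ = 5 + 3 * L := by ring))
  rw [intervalIntegral.integral_of_le hR, intervalIntegral.integral_of_le hR,
    integral_Ioc_eq_integral_Ioo, integral_Ioc_eq_integral_Ioo] at key
  linarith [key]

/-! ### Polar angle vector -/

def omg (θ : ℝ) : E2 := TE (Real.cos θ, Real.sin θ)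

lemma omg_norm (θ : ℝ) : ‖omg θ‖ = 1 := by
  rw [omg, TE_norm]
  simp [Real.cos_sq_add_sin_sq]

lemma omg_cont : Continuous omg := TE_cont.comp (by fun_prop)

def Hfun (f : E2 → ℝ) (x : E2) (p : ℝ × ℝ) : ℝ :=
  rayPhi' f x (omg p.2) p.1 * rayV f x (omg p.2) p.1

def Kfun (f : E2 → ℝ) (Cinf : ℝ) (x : E2) (p : ℝ × ℝ) : ℝ :=
  rayU f Cinf x (omg p.2) p.1 * rayV' f x (omg p.2) p.1

lemma cont_z2 : Continuous fun p : ℝ × ℝ => x - p.1 • omg p.2 := by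
  have := omg_cont
  fun_prop

lemma measurable_phi2 : Measurable fun p : ℝ × ℝ => rayPhi' f x (omg p.2) p.1 := by
  simp only [rayPhi']
  exact Measurable.inner ((measurable_gradient f).comp cont_z2.measurable)
    (omg_cont.comp continuous_snd).measurable

lemma cont_rayPhi2 (hf : Differentiable ℝ f) :
    Continuous fun p : ℝ × ℝ => rayPhi f x (omg p.2) p.1 := by
  have h1 := hf.continuous
  have h2 := cont_z2 (x := x)
  simp only [rayPhi]
  fun_prop

lemma cont_rayU2 (hf : Differentiable ℝ f) :
    Continuous fun p : ℝ × ℝ => rayU f Cinf x (omg p.2) p.1 := by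
  have h1 := hf.continuous
  have h2 := cont_z2 (x := x)
  simp only [rayU]
  fun_prop

lemma cont_rayQ2 (hf : Differentiable ℝ f) :
    Continuous fun p : ℝ × ℝ => rayQ f x (omg p.2) p.1 := by
  have h1 := cont_rayPhi2 (x := x) hf
  simp only [rayQ, rayD]
  exact (Real.continuous_sqrt).comp ((continuous_fst.pow 2).add (h1.pow 2))

lemma measurable_Hfun (hf : Differentiable ℝ f) : Measurable (Hfun f x) := by
  have hq := (cont_rayQ2 (x := x) hf).measurable
  apply (measurable_phi2 (f := f) (x := x)).mul
  simp only [rayV]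
  exact ((continuous_fst.pow 2).measurable).div (hq.pow_const 3)

lemma measurable_Kfun (hf : Differentiable ℝ f) : Measurable (Kfun f Cinf x) := by
  have hq := (cont_rayQ2 (x := x) hf).measurable
  have hφ := (cont_rayPhi2 (x := x) hf).measurable
  have hφ' := measurable_phi2 (f := f) (x := x)
  apply ((cont_rayU2 (x := x) (Cinf := Cinf) hf).measurable).mul
  simp only [rayV']
  apply Measurable.div
  · apply Measurable.sub
    · exact (measurable_const.mul continuous_fst.measurable).mul (hq.pow_const 3)
    · exact ((continuous_fst.pow 2).measurable).mul
        ((measurable_const.mul (hq.pow_const 2)).mul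
          (((measurable_const.div (measurable_const.mul hq))).mul
            ((measurable_const.mul continuous_fst.measurable).add
              ((measurable_const.mul hφ).mul hφ'))))
  · exact (hq.pow_const 3).pow_const 2

lemma rpow_neg_two {r : ℝ} (hr : 0 < r) : r ^ (-2 : ℝ) = 1 / r ^ 2 := by
  have h : ((-2 : ℝ)) = ((-2 : ℤ) : ℝ) := by norm_num
  rw [h, Real.rpow_intCast]
  field_simp

lemma annulus_to_polar (f : E2 → ℝ) (x : E2) (R : ℝ) :
    (∫ y in {y : E2 | 1 < ‖y‖ ∧ ‖y‖ < R},
        ⟪gradient f (x - y), y⟫ / (‖y‖ ^ 2 + (f x - f (x - y)) ^ 2) ^ (3 / 2 : ℝ)) =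
      ∫ p in Ioo 1 R ×ˢ Ioo (-π) π, Hfun f x p := by
  set F : E2 → ℝ := fun y =>
    ⟪gradient f (x - y), y⟫ / (‖y‖ ^ 2 + (f x - f (x - y)) ^ 2) ^ (3 / 2 : ℝ) with hF
  set A : Set E2 := {y : E2 | 1 < ‖y‖ ∧ ‖y‖ < R} with hA
  have hAm : MeasurableSet A := by
    have : A = (fun y : E2 => ‖y‖) ⁻¹' Ioo 1 R := by
      ext y; simp [hA, mem_Ioo]
    rw [this]
    exact measurableSet_Ioo.preimage continuous_norm.measurable
  have hpre : MeasurableSet (TE ⁻¹' A) := hAm.preimage TE.measurable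
  calc ∫ y in A, F y
      = ∫ p in TE ⁻¹' A, F (TE p) :=
        (TE_measurePreserving.setIntegral_preimage_emb TE.measurableEmbedding F A).symm
    _ = ∫ p, Set.indicator (TE ⁻¹' A) (fun q => F (TE q)) p := (integral_indicator hpre).symm
    _ = ∫ p in polarCoord.target,
          p.1 • Set.indicator (TE ⁻¹' A) (fun q => F (TE q)) (polarCoord.symm p) :=
        (integral_comp_polarCoord_symm _).symm
    _ = ∫ p in polarCoord.target,
          Set.indicator (Ioo 1 R ×ˢ (univ : Set ℝ)) (Hfun f x) p := by
        apply setIntegral_congr_fun polarCoord.open_target.measurableSet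
        intro p hp
        rw [polarCoord_target] at hp
        have hp1 : 0 < p.1 := hp.1
        have hsymm : polarCoord.symm p = (p.1 * Real.cos p.2, p.1 * Real.sin p.2) :=
          polarCoord_symm_apply p
        have hTEs : TE (polarCoord.symm p) = p.1 • omg p.2 := by
          rw [hsymm]; exact TE_smul _ _ _
        have hnorm : ‖TE (polarCoord.symm p)‖ = p.1 := by
          rw [hTEs, norm_smul, omg_norm, mul_one, Real.norm_eq_abs, abs_of_pos hp1]
        show p.1 • Set.indicator (TE ⁻¹' A) (fun q => F (TE q)) (polarCoord.symm p) =
          Set.indicator (Ioo 1 R ×ˢ (univ : Set ℝ)) (Hfun f x) p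
        by_cases hmem : 1 < p.1 ∧ p.1 < R
        · rw [Set.indicator_of_mem, Set.indicator_of_mem]
          · show p.1 • F (TE (polarCoord.symm p)) = Hfun f x p
            rw [hTEs, hF]
            have hden : (‖p.1 • omg p.2‖ ^ 2 +
                (f x - f (x - p.1 • omg p.2)) ^ 2) ^ (3 / 2 : ℝ) =
                rayQ f x (omg p.2) p.1 ^ 3 := by
              have hns : ‖p.1 • omg p.2‖ ^ 2 = p.1 ^ 2 := by
                rw [norm_smul, omg_norm, mul_one, Real.norm_eq_abs, sq_abs]
              rw [hns]
              have : p.1 ^ 2 + (f x - f (x - p.1 • omg p.2)) ^ 2 = rayD f x (omg p.2) p.1 := rfl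
              rw [this, rpow_three_halves (by rw [rayD]; positivity), rayQ]
            simp only []
            rw [hden, real_inner_smul_right]
            show p.1 * (p.1 * ⟪gradient f (x - p.1 • omg p.2), omg p.2⟫ /
                rayQ f x (omg p.2) p.1 ^ 3) = Hfun f x p
            rw [Hfun, rayV, rayPhi']
            ring
          · exact ⟨hmem, trivial⟩
          · rw [Set.mem_preimage, hA, Set.mem_setOf_eq, hnorm]; exact hmem
        · rw [Set.indicator_of_notMem, Set.indicator_of_notMem]
          · simp
          · intro hc; exact hmem ⟨hc.1.1, hc.1.2⟩
          · rw [Set.mem_preimage, hA, Set.mem_setOf_eq, hnorm]; exact hmem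
    _ = ∫ p in polarCoord.target ∩ Ioo 1 R ×ˢ (univ : Set ℝ), Hfun f x p := by
        rw [setIntegral_indicator (measurableSet_Ioo.prod MeasurableSet.univ)]
    _ = ∫ p in Ioo 1 R ×ˢ Ioo (-π) π, Hfun f x p := by
        have hss : Ioi (0:ℝ) ∩ Ioo 1 R = Ioo 1 R :=
          Set.inter_eq_self_of_subset_right (fun y hy => lt_trans one_pos hy.1)
        rw [polarCoord_target, Set.prod_inter_prod, Set.inter_univ, hss]

lemma restrict_prod_eq (s t : Set ℝ) :
    (volume : Measure (ℝ × ℝ)).restrict (s ×ˢ t) =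
      (volume.restrict s).prod (volume.restrict t) := by
  rw [Measure.volume_eq_prod, Measure.prod_restrict]

lemma fubini_theta {G : ℝ × ℝ → ℝ} {s t : Set ℝ} (hG : IntegrableOn G (s ×ˢ t)) :
    ∫ p in s ×ˢ t, G p = ∫ θ in t, ∫ r in s, G (r, θ) := by
  rw [IntegrableOn, restrict_prod_eq] at hG
  calc ∫ p in s ×ˢ t, G p = ∫ p, G p ∂((volume.restrict s).prod (volume.restrict t)) := by
        rw [restrict_prod_eq]
    _ = ∫ θ in t, ∫ r in s, G (r, θ) := integral_prod_symm G hG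

lemma marginal_theta {G : ℝ × ℝ → ℝ} {s t : Set ℝ} (hG : IntegrableOn G (s ×ˢ t)) :
    Integrable (fun θ => ∫ r in s, G (r, θ)) (volume.restrict t) := by
  rw [IntegrableOn, restrict_prod_eq] at hG
  exact hG.integral_prod_right

lemma theta_toReal : (volume (Ioo (-π) π)).toReal = 2 * π := by
  rw [Real.volume_Ioo, ENNReal.toReal_ofReal (by nlinarith [Real.pi_pos])]
  ring

lemma integrableOn_w1 {c a : ℝ} (ha : 0 < a) : IntegrableOn (fun r => c / r ^ 2) (Ioi a) := by
  apply IntegrableOn.congr_fun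
    (((integrableOn_Ioi_rpow_of_lt (by norm_num : (-2:ℝ) < -1) ha)).const_mul c)
  · intro r hr
    show c * r ^ (-2:ℝ) = c / r ^ 2
    rw [rpow_neg_two (lt_trans ha hr)]
    ring
  · exact measurableSet_Ioi

lemma integral_w1 {c a : ℝ} (ha : 0 < a) : ∫ r in Ioi a, c / r ^ 2 = c / a := by
  rw [setIntegral_congr_fun measurableSet_Ioi
    (g := fun r => c * r ^ (-2 : ℝ)) (f := fun r => c / r ^ 2)
    (by intro r hr; show c / r ^ 2 = c * r ^ (-2:ℝ);
        rw [rpow_neg_two (lt_trans ha hr)]; ring),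
    integral_const_mul, integral_Ioi_rpow_of_lt (by norm_num) ha]
  rw [show (-2:ℝ) + 1 = -1 by norm_num, Real.rpow_neg_one]
  field_simp

lemma integrableOn_w2 {c a : ℝ} (ha : 0 < a) :
    IntegrableOn (fun p : ℝ × ℝ => c / p.1 ^ 2) (Ioi a ×ˢ Ioo (-π) π) := by
  rw [IntegrableOn, restrict_prod_eq]
  haveI : IsFiniteMeasure (volume.restrict (Ioo (-π) π)) :=
    ⟨by rw [Measure.restrict_apply_univ]; exact measure_Ioo_lt_top⟩
  have h := Integrable.mul_prod (μ := volume.restrict (Ioi a))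
    (ν := volume.restrict (Ioo (-π) π)) (integrableOn_w1 (c := c) ha) (integrable_const (1:ℝ))
  simpa using h

lemma integral_w2 {c a : ℝ} (ha : 0 < a) :
    ∫ p in Ioi a ×ˢ Ioo (-π) π, c / p.1 ^ 2 = (2 * π) * (c / a) := by
  rw [fubini_theta (integrableOn_w2 ha)]
  rw [show (fun θ : ℝ => ∫ r in Ioi a, c / r ^ 2) = fun _ : ℝ => c / a by
    funext θ; exact integral_w1 ha]
  rw [setIntegral_const, measureReal_def, theta_toReal, smul_eq_mul]

lemma measurable_rayV2 (hf : Differentiable ℝ f) :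
    Measurable fun p : ℝ × ℝ => rayV f x (omg p.2) p.1 := by
  simp only [rayV]
  exact ((continuous_fst.pow 2).measurable).div (((cont_rayQ2 (x := x) hf).measurable).pow_const 3)

/-- **Pointwise bound for the long-range convolution part.**  There is a universal constant
`C` such that for every differentiable `f : ℝ² → ℝ` with `∇f` and `f - C∞` bounded and every
`x`, the principal value
`J₉(x) = -lim_{R→∞} ∫_{1<|y|<R} ∇f(x-y)⬝y / [|y|²+(f(x)-f(x-y))²]^{3/2} dy`
exists and `|J₉(x)| ≤ C (sup|∇f| + 1) ‖f-C∞‖_∞`. -/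
theorem long_range_convolution_part_bound :
    ∃ C : ℝ, 0 < C ∧ ∀ (Cinf : ℝ) (f : E2 → ℝ),
      Differentiable ℝ f →
      BddAbove (Set.range fun x => ‖gradient f x‖) →
      BddAbove (Set.range fun x => |f x - Cinf|) →
      ∀ x : E2, ∃ I : ℝ,
        Tendsto (fun R : ℝ => -∫ y in {y : E2 | 1 < ‖y‖ ∧ ‖y‖ < R},
            ⟪gradient f (x - y), y⟫ / (‖y‖ ^ 2 + (f x - f (x - y)) ^ 2) ^ (3 / 2 : ℝ))
          atTop (𝓝 I) ∧
        |I| ≤ C * ((⨆ x : E2, ‖gradient f x‖) + 1) * (⨆ x : E2, |f x - Cinf|) := by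
  refine ⟨12 * π, by positivity, ?_⟩
  intro Cinf f hf hBL hBM x
  set L := ⨆ z : E2, ‖gradient f z‖ with hLdef
  set M := ⨆ z : E2, |f z - Cinf| with hMdef
  have hLb : ∀ z, ‖gradient f z‖ ≤ L := fun z => le_ciSup hBL z
  have hMb : ∀ z, |f z - Cinf| ≤ M := fun z => le_ciSup hBM z
  have hL0 : 0 ≤ L := le_trans (norm_nonneg _) (hLb x)
  have hM0 : 0 ≤ M := le_trans (abs_nonneg _) (hMb x)
  set Θ : Set ℝ := Ioo (-π) π with hΘ
  set c : ℝ := M * (5 + 3 * L) with hc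
  have hc0 : 0 ≤ c := mul_nonneg hM0 (by linarith)
  have hΘm : MeasurableSet Θ := measurableSet_Ioo
  have hΘfin : volume Θ < ⊤ := measure_Ioo_lt_top
  -- pointwise bounds
  have hUb : ∀ (ω : E2) (r : ℝ), |rayU f Cinf x ω r| ≤ M := fun ω r => by
    rw [rayU, abs_sub_comm]; exact hMb _
  have hφ'b : ∀ (θ : ℝ) (r : ℝ), |rayPhi' f x (omg θ) r| ≤ L := fun θ r =>
    abs_rayPhi'_le (omg_norm θ) hLb r
  have hVb : ∀ (θ : ℝ) {r : ℝ}, 1 ≤ r → |rayV f x (omg θ) r| ≤ 1 / r := fun θ r hr => by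
    rw [abs_of_nonneg (rayV_nonneg _)]; exact rayV_le hr
  have hKbd : ∀ p : ℝ × ℝ, 1 < p.1 → |Kfun f Cinf x p| ≤ c / p.1 ^ 2 := by
    intro p hp
    have h1 : |rayV' f x (omg p.2) p.1| ≤ (5 + 3 * L) / p.1 ^ 2 :=
      rayV'_bound hp.le (hφ'b _ _)
    rw [Kfun, abs_mul]
    calc |rayU f Cinf x (omg p.2) p.1| * |rayV' f x (omg p.2) p.1|
        ≤ M * ((5 + 3 * L) / p.1 ^ 2) :=
          mul_le_mul (hUb _ _) h1 (abs_nonneg _) hM0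
      _ = c / p.1 ^ 2 := by rw [hc]; ring
  have hHbd : ∀ p : ℝ × ℝ, 1 < p.1 → |Hfun f x p| ≤ L := by
    intro p hp
    rw [Hfun, abs_mul]
    have h2 : |rayV f x (omg p.2) p.1| ≤ 1 := by
      refine le_trans (hVb _ hp.le) ?_
      rw [div_le_one (lt_trans one_pos hp)]; exact hp.le
    calc |rayPhi' f x (omg p.2) p.1| * |rayV f x (omg p.2) p.1|
        ≤ L * 1 := mul_le_mul (hφ'b _ _) h2 (abs_nonneg _) hL0
      _ = L := mul_one L
  -- integrability
  have hHint : ∀ R : ℝ, IntegrableOn (Hfun f x) (Ioo 1 R ×ˢ Θ) := by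
    intro R
    apply Integrable.mono' (g := fun _ => L)
      (integrableOn_const (by
        rw [Measure.volume_eq_prod, Measure.prod_prod]
        exact (ENNReal.mul_lt_top measure_Ioo_lt_top measure_Ioo_lt_top).ne))
      ((measurable_Hfun hf).aestronglyMeasurable.restrict)
    filter_upwards [ae_restrict_mem (measurableSet_Ioo.prod hΘm)] with p hp
    rw [Real.norm_eq_abs]
    exact hHbd p hp.1.1
  have hKint : ∀ {s : Set ℝ}, s ⊆ Ioi 1 → IntegrableOn (Kfun f Cinf x) (s ×ˢ Θ) := by
    intro s hs
    apply IntegrableOn.mono_set (t := Ioi 1 ×ˢ Θ) ?_ (Set.prod_mono_left hs)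
    apply Integrable.mono' (integrableOn_w2 (c := c) one_pos)
      ((measurable_Kfun hf).aestronglyMeasurable.restrict)
    filter_upwards [ae_restrict_mem (measurableSet_Ioi.prod hΘm)] with p hp
    rw [Real.norm_eq_abs]
    exact hKbd p hp.1
  have hbint : ∀ {r : ℝ}, 1 ≤ r →
      IntegrableOn (fun θ => rayU f Cinf x (omg θ) r * rayV f x (omg θ) r) Θ := by
    intro r hr
    apply Integrable.mono' (g := fun _ => M)
      (integrableOn_const hΘfin.ne)
      ((((cont_rayU2 (x := x) (Cinf := Cinf) hf).measurable.mul
        (measurable_rayV2 (x := x) hf)).comp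
          (measurable_const.prodMk measurable_id)).aestronglyMeasurable.restrict)
    filter_upwards [ae_restrict_mem hΘm] with θ _
    show ‖rayU f Cinf x (omg θ) r * rayV f x (omg θ) r‖ ≤ M
    rw [Real.norm_eq_abs, abs_mul]
    calc |rayU f Cinf x (omg θ) r| * |rayV f x (omg θ) r|
        ≤ M * 1 := by
          apply mul_le_mul (hUb _ _) ?_ (abs_nonneg _) hM0
          refine le_trans (hVb _ hr) ?_
          rw [div_le_one (lt_of_lt_of_le one_pos hr)]; exact hr
      _ = M := mul_one M
  -- key identity for R > 1
  have hkey : ∀ R : ℝ, 1 < R →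
      (∫ y in {y : E2 | 1 < ‖y‖ ∧ ‖y‖ < R},
        ⟪gradient f (x - y), y⟫ / (‖y‖ ^ 2 + (f x - f (x - y)) ^ 2) ^ (3 / 2 : ℝ)) =
      (∫ θ in Θ, rayU f Cinf x (omg θ) R * rayV f x (omg θ) R) -
        (∫ θ in Θ, rayU f Cinf x (omg θ) 1 * rayV f x (omg θ) 1) -
        ∫ p in Ioc 1 R ×ˢ Θ, Kfun f Cinf x p := by
    intro R hR
    rw [annulus_to_polar f x R]
    have hKR : IntegrableOn (Kfun f Cinf x) (Ioc 1 R ×ˢ Θ) := hKint Ioc_subset_Ioi_self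
    have hsum : (∫ p in Ioo 1 R ×ˢ Θ, Hfun f x p) + (∫ p in Ioc 1 R ×ˢ Θ, Kfun f Cinf x p) =
        (∫ θ in Θ, rayU f Cinf x (omg θ) R * rayV f x (omg θ) R) -
          ∫ θ in Θ, rayU f Cinf x (omg θ) 1 * rayV f x (omg θ) 1 := by
      rw [fubini_theta (hHint R), fubini_theta hKR,
        ← integral_add (marginal_theta (hHint R)) (marginal_theta hKR)]
      rw [setIntegral_congr_fun hΘm (g := fun θ =>
        rayU f Cinf x (omg θ) R * rayV f x (omg θ) R -
          rayU f Cinf x (omg θ) 1 * rayV f x (omg θ) 1) ?_]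
      · exact integral_sub (hbint hR.le) (hbint le_rfl)
      · intro θ _
        have h1 : (fun r => Hfun f x (r, θ)) =
            fun r => rayPhi' f x (omg θ) r * rayV f x (omg θ) r := rfl
        have h2 : (fun r => Kfun f Cinf x (r, θ)) =
            fun r => rayU f Cinf x (omg θ) r * rayV' f x (omg θ) r := rfl
        show (∫ r in Ioo 1 R, Hfun f x (r, θ)) + (∫ r in Ioc 1 R, Kfun f Cinf x (r, θ)) = _
        rw [h1, h2, integral_Ioc_eq_integral_Ioo]
        exact ray_ibp hf (omg_norm θ) hLb hR.le
    linarith [hsum]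
  -- limits
  set P : ℝ → ℝ := fun R => ∫ θ in Θ, rayU f Cinf x (omg θ) R * rayV f x (omg θ) R with hPdef
  set Q : ℝ := ∫ θ in Θ, rayU f Cinf x (omg θ) 1 * rayV f x (omg θ) 1 with hQdef
  set W : ℝ → ℝ := fun R => ∫ p in Ioc 1 R ×ˢ Θ, Kfun f Cinf x p with hWdef
  set Winf : ℝ := ∫ p in Ioi 1 ×ˢ Θ, Kfun f Cinf x p with hWinfdef
  have hPb : ∀ R : ℝ, 1 ≤ R → ‖P R‖ ≤ (M * (2 * π)) / R := by
    intro R hR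
    have hR0 : (0:ℝ) < R := lt_of_lt_of_le one_pos hR
    calc ‖P R‖ ≤ (M / R) * (volume Θ).toReal := by
          apply norm_setIntegral_le_of_norm_le_const_ae' hΘfin
          · filter_upwards with θ _
            rw [Real.norm_eq_abs, abs_mul]
            calc |rayU f Cinf x (omg θ) R| * |rayV f x (omg θ) R|
                ≤ M * (1 / R) := mul_le_mul (hUb _ _) (hVb _ hR) (abs_nonneg _) hM0
              _ = M / R := by ring
      _ = (M * (2 * π)) / R := by rw [hΘ, theta_toReal]; ring
  have hPten : Tendsto P atTop (𝓝 0) := by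
    apply squeeze_zero_norm' (a := fun R => (M * (2 * π)) / R)
    · filter_upwards [eventually_ge_atTop 1] with R hR using hPb R hR
    · exact Tendsto.div_atTop tendsto_const_nhds tendsto_id
  have hWten : Tendsto W atTop (𝓝 Winf) := by
    have h0 : Tendsto (fun R => W R - Winf) atTop (𝓝 0) := by
      apply squeeze_zero_norm' (a := fun R => (2 * π) * (c / R))
      · filter_upwards [eventually_gt_atTop 1] with R hR
        have hunion : (Ioc (1:ℝ) R ×ˢ Θ) ∪ (Ioi R ×ˢ Θ) = Ioi 1 ×ˢ Θ := by
          rw [← Set.union_prod, Ioc_union_Ioi_eq_Ioi hR.le]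
        have hdisj : Disjoint (Ioc (1:ℝ) R ×ˢ Θ) (Ioi R ×ˢ Θ) := by
          apply Set.disjoint_left.mpr
          rintro p hp1 hp2
          exact absurd hp2.1 (not_lt.mpr hp1.1.2)
        have hsplit : Winf = W R + ∫ p in Ioi R ×ˢ Θ, Kfun f Cinf x p := by
          rw [hWinfdef, ← hunion,
            setIntegral_union hdisj (measurableSet_Ioi.prod hΘm)
              (hKint Ioc_subset_Ioi_self)
              (hKint (fun y hy => lt_trans hR hy))]
        have htail : ‖∫ p in Ioi R ×ˢ Θ, Kfun f Cinf x p‖ ≤ (2 * π) * (c / R) := by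
          calc ‖∫ p in Ioi R ×ˢ Θ, Kfun f Cinf x p‖
              ≤ ∫ p in Ioi R ×ˢ Θ, ‖Kfun f Cinf x p‖ := norm_integral_le_integral_norm _
            _ ≤ ∫ p in Ioi R ×ˢ Θ, c / p.1 ^ 2 := by
                apply setIntegral_mono_on ((hKint (fun y hy => lt_trans hR hy)).norm)
                  (integrableOn_w2 (lt_trans one_pos hR))
                  (measurableSet_Ioi.prod hΘm)
                intro p hp
                rw [Real.norm_eq_abs]
                exact hKbd p (lt_trans hR hp.1)
            _ = (2 * π) * (c / R) := integral_w2 (lt_trans one_pos hR)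
        rw [hsplit]
        simpa using htail
      · have : Tendsto (fun R : ℝ => (2 * π * c) / R) atTop (𝓝 0) :=
          Tendsto.div_atTop tendsto_const_nhds tendsto_id
        refine this.congr (fun R => by ring)
    have := h0.add (tendsto_const_nhds (x := Winf))
    simpa using this
  refine ⟨Q + Winf, ?_, ?_⟩
  · have hev : (fun R => -P R + Q + W R) =ᶠ[atTop]
        (fun R : ℝ => -∫ y in {y : E2 | 1 < ‖y‖ ∧ ‖y‖ < R},
          ⟪gradient f (x - y), y⟫ / (‖y‖ ^ 2 + (f x - f (x - y)) ^ 2) ^ (3 / 2 : ℝ)) := by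
      filter_upwards [eventually_gt_atTop 1] with R hR
      rw [hkey R hR]
      ring
    have hlim : Tendsto (fun R => -P R + Q + W R) atTop (𝓝 (-0 + Q + Winf)) :=
      ((hPten.neg).add tendsto_const_nhds).add hWten
    rw [show -(0:ℝ) + Q + Winf = Q + Winf by ring] at hlim
    exact Tendsto.congr' hev hlim
  · have hQb : |Q| ≤ M * (2 * π) := by
      rw [← Real.norm_eq_abs]
      calc ‖Q‖ ≤ M * (volume Θ).toReal := by
            apply norm_setIntegral_le_of_norm_le_const_ae' hΘfin
            · filter_upwards with θ _
              rw [Real.norm_eq_abs, abs_mul]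
              calc |rayU f Cinf x (omg θ) 1| * |rayV f x (omg θ) 1|
                  ≤ M * 1 := by
                    apply mul_le_mul (hUb _ _) ?_ (abs_nonneg _) hM0
                    simpa using hVb θ le_rfl
                _ = M := mul_one M
        _ = M * (2 * π) := by rw [hΘ, theta_toReal]
    have hWb : |Winf| ≤ (2 * π) * c := by
      rw [← Real.norm_eq_abs]
      calc ‖Winf‖ ≤ ∫ p in Ioi 1 ×ˢ Θ, ‖Kfun f Cinf x p‖ := norm_integral_le_integral_norm _
        _ ≤ ∫ p in Ioi 1 ×ˢ Θ, c / p.1 ^ 2 := by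
            apply setIntegral_mono_on ((hKint (le_refl _)).norm)
              (integrableOn_w2 one_pos) (measurableSet_Ioi.prod hΘm)
            intro p hp
            rw [Real.norm_eq_abs]
            exact hKbd p hp.1
        _ = (2 * π) * (c / 1) := integral_w2 one_pos
        _ = (2 * π) * c := by ring
    calc |Q + Winf| ≤ |Q| + |Winf| := abs_add_le _ _
      _ ≤ M * (2 * π) + (2 * π) * c := add_le_add hQb hWb
      _ ≤ 12 * π * (L + 1) * M := by
          rw [hc]
          nlinarith [Real.pi_pos, hM0, hL0, mul_nonneg (mul_nonneg Real.pi_pos.le hM0) hL0]
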